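/- arXiv:1412.4898 — 4 statements merged into one kernel-verified Lean document; each statement's English description precedes it below -/
import Mathlib

section
/- (Theorem 1) Let (Ω, ℱ, P) be a probability space, Π a nonempty finite set, α ≥ 0, K ∈ ℝ, N ≥ 1 a natural number, and ε > α. For each π ∈ Π, let Y^π_1, …, Y^π_N be independent identically distributed random variables taking values in [0,1] with mean J(π) := E[Y^π_1], and let Z^π_1, …, Z^π_N be random variables taking values in [0,1] such that |Y^π_n − Z^π_n| ≤ α almost surely for every n. Define Ĵ_N(π) := (1/N) ∑_{n=1}^N Z^π_n, the estimated feasible set Π_{f,N} := {π ∈ Π : Ĵ_N(π) ≤ K}, and for δ ∈ ℝ the set Π_f^δ := {π ∈ Π : J(π) ≤ K + δ}. Then P(Π_f^{−ε} ⊆ Π_{f,N} ∧ Π_{f,N} ⊆ Π_f^ε) ≥ 1 − 2 · |Π| · exp(−2(ε − α)² N). -/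
open MeasureTheory ProbabilityTheory

section AuxHoeffding

open Real

lemma aux_h_pos {p : ℝ} (hp0 : 0 ≤ p) (hp1 : p ≤ 1) (u : ℝ) :
    0 < 1 - p + p * Real.exp u := by
  rcases le_or_gt (Real.exp u) 1 with h | h
  · nlinarith [Real.exp_pos u]
  · nlinarith [Real.exp_pos u]

/-- The key calculus inequality behind Hoeffding's lemma. -/
lemma aux_log_le {p : ℝ} (hp0 : 0 ≤ p) (hp1 : p ≤ 1) (u : ℝ) :
    Real.log (1 - p + p * Real.exp u) ≤ p * u + u ^ 2 / 8 := by
  have hpos : ∀ x : ℝ, 0 < 1 - p + p * Real.exp x := fun x => aux_h_pos hp0 hp1 x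
  set g : ℝ → ℝ := fun x => p * Real.exp x / (1 - p + p * Real.exp x) with hgdef
  have hg0 : ∀ x, 0 ≤ g x := fun x =>
    div_nonneg (mul_nonneg hp0 (Real.exp_pos x).le) (hpos x).le
  have hg1 : ∀ x, g x ≤ 1 := by
    intro x
    rw [hgdef]
    simp only
    rw [div_le_one (hpos x)]
    linarith
  set F : ℝ → ℝ := fun x => p * x + x ^ 2 / 8 - Real.log (1 - p + p * Real.exp x) with hFdef
  set F1 : ℝ → ℝ := fun x => p + x / 4 - g x with hF1def
  have hdh : ∀ x : ℝ, HasDerivAt (fun y => 1 - p + p * Real.exp y) (p * Real.exp x) x := by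
    intro x
    simpa using ((Real.hasDerivAt_exp x).const_mul p).const_add (1 - p)
  have hdF : ∀ x, HasDerivAt F (F1 x) x := by
    intro x
    have h1 : HasDerivAt (fun y : ℝ => p * y) p x := by
      simpa using (hasDerivAt_id x).const_mul p
    have h2 : HasDerivAt (fun y : ℝ => y ^ 2 / 8) (x / 4) x := by
      have h : HasDerivAt (fun y : ℝ => y ^ 2 / 8) _ x := (hasDerivAt_pow 2 x).div_const 8
      convert h using 1
      push_cast
      ring
    have h3 : HasDerivAt (fun y => Real.log (1 - p + p * Real.exp y))
        (p * Real.exp x / (1 - p + p * Real.exp x)) x := (hdh x).log (hpos x).ne'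
    exact (h1.add h2).sub h3
  have hdF1 : ∀ x, HasDerivAt F1 (1 / 4 - g x * (1 - g x)) x := by
    intro x
    have h1 : HasDerivAt (fun y : ℝ => p + y / 4) (1 / 4) x := by
      simpa using ((hasDerivAt_id x).div_const 4).const_add p
    have hnum : HasDerivAt (fun y => p * Real.exp y) (p * Real.exp x) x :=
      (Real.hasDerivAt_exp x).const_mul p
    have h2 : HasDerivAt g
        ((p * Real.exp x * (1 - p + p * Real.exp x) - p * Real.exp x * (p * Real.exp x)) /
          (1 - p + p * Real.exp x) ^ 2) x := hnum.div (hdh x) (hpos x).ne'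
    have hval : (p * Real.exp x * (1 - p + p * Real.exp x) - p * Real.exp x * (p * Real.exp x)) /
          (1 - p + p * Real.exp x) ^ 2 = g x * (1 - g x) := by
      rw [hgdef]
      simp only
      generalize hd : 1 - p + p * Real.exp x = d
      have hdne : d ≠ 0 := hd ▸ (hpos x).ne'
      generalize p * Real.exp x = q
      field_simp
    rw [hval] at h2
    exact h1.sub h2
  have hF1mono : Monotone F1 :=
    monotone_of_hasDerivAt_nonneg hdF1 (by
      intro x
      simp only [Pi.zero_apply]
      nlinarith [hg0 x, hg1 x, sq_nonneg (g x - 1/2)])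
  have hF10 : F1 0 = 0 := by
    rw [hF1def, hgdef]
    simp
  have hcont : Continuous F := by
    have : Differentiable ℝ F := fun x => (hdF x).differentiableAt
    exact this.continuous
  have hmono : MonotoneOn F (Set.Ici 0) := by
    apply monotoneOn_of_hasDerivWithinAt_nonneg (convex_Ici 0) hcont.continuousOn
      (fun x _ => (hdF x).hasDerivWithinAt)
    intro x hx
    rw [interior_Ici] at hx
    have : (0:ℝ) ≤ x := le_of_lt hx
    calc (0:ℝ) = F1 0 := hF10.symm
      _ ≤ F1 x := hF1mono this
  have hanti : AntitoneOn F (Set.Iic 0) := by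
    apply antitoneOn_of_hasDerivWithinAt_nonpos (convex_Iic 0) hcont.continuousOn
      (fun x _ => (hdF x).hasDerivWithinAt)
    intro x hx
    rw [interior_Iic] at hx
    calc F1 x ≤ F1 0 := hF1mono (le_of_lt hx)
      _ = 0 := hF10
  have hF0 : F 0 = 0 := by
    rw [hFdef]
    simp
  have hFu : 0 ≤ F u := by
    rcases le_total 0 u with hu | hu
    · rw [← hF0]; exact hmono Set.self_mem_Ici hu hu
    · rw [← hF0]; exact hanti hu Set.self_mem_Iic hu
  rw [hFdef] at hFu
  simp only at hFu
  linarith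

lemma aux_int_exp {Ω : Type*} [MeasurableSpace Ω] {P : Measure Ω} [IsProbabilityMeasure P]
    {X : Ω → ℝ} (hX : Measurable X) (h01 : ∀ ω, X ω ∈ Set.Icc (0:ℝ) 1) (t : ℝ) :
    Integrable (fun ω => Real.exp (t * X ω)) P := by
  refine Integrable.mono' (integrable_const (Real.exp |t|))
    ((hX.const_mul t).exp.aestronglyMeasurable) ?_
  filter_upwards with ω
  rw [Real.norm_eq_abs, abs_of_pos (Real.exp_pos _), Real.exp_le_exp]
  have h1 := (h01 ω).1
  have h2 := (h01 ω).2
  calc t * X ω ≤ |t * X ω| := le_abs_self _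
    _ = |t| * |X ω| := abs_mul _ _
    _ ≤ |t| * 1 := by
        refine mul_le_mul_of_nonneg_left ?_ (abs_nonneg t)
        rw [abs_le]; constructor <;> linarith
    _ = |t| := mul_one _

lemma aux_int_X {Ω : Type*} [MeasurableSpace Ω] {P : Measure Ω} [IsProbabilityMeasure P]
    {X : Ω → ℝ} (hX : Measurable X) (h01 : ∀ ω, X ω ∈ Set.Icc (0:ℝ) 1) :
    Integrable X P := by
  refine Integrable.mono' (integrable_const 1) hX.aestronglyMeasurable ?_
  filter_upwards with ω
  rw [Real.norm_eq_abs, abs_le]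
  exact ⟨by linarith [(h01 ω).1], (h01 ω).2⟩

lemma aux_mgf_le {Ω : Type*} [MeasurableSpace Ω] {P : Measure Ω} [IsProbabilityMeasure P]
    {X : Ω → ℝ} (hX : Measurable X) (h01 : ∀ ω, X ω ∈ Set.Icc (0:ℝ) 1) (t : ℝ) :
    mgf X P t ≤ Real.exp (t * (∫ ω, X ω ∂P) + t ^ 2 / 8) := by
  have hXint : Integrable X P := aux_int_X hX h01
  set m := ∫ ω, X ω ∂P with hmdef
  have hm0 : 0 ≤ m := integral_nonneg fun ω => (h01 ω).1
  have hm1 : m ≤ 1 := by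
    have h := integral_mono hXint (integrable_const 1) (fun ω => (h01 ω).2)
    simpa using h
  have hptw : ∀ ω, Real.exp (t * X ω) ≤ (1 - X ω) + X ω * Real.exp t := by
    intro ω
    have hx0 := (h01 ω).1
    have hx1 := (h01 ω).2
    have hcv := convexOn_exp.2 (Set.mem_univ (0:ℝ)) (Set.mem_univ t)
      (by linarith : (0:ℝ) ≤ 1 - X ω) hx0 (by ring)
    simpa [smul_eq_mul, Real.exp_zero, mul_comm] using hcv
  have hint2 : Integrable (fun ω => (1 - X ω) + X ω * Real.exp t) P :=
    ((integrable_const 1).sub hXint).add (hXint.mul_const _)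
  have h1 : mgf X P t ≤ ∫ ω, ((1 - X ω) + X ω * Real.exp t) ∂P :=
    integral_mono (aux_int_exp hX h01 t) hint2 hptw
  have h2 : ∫ ω, ((1 - X ω) + X ω * Real.exp t) ∂P = 1 - m + m * Real.exp t := by
    have e1 : Integrable (fun ω => 1 - X ω) P := (integrable_const 1).sub hXint
    rw [integral_add e1 (hXint.mul_const _), integral_mul_const]
    have e2 : ∫ ω, (1 - X ω) ∂P = 1 - m := by
      rw [integral_sub (integrable_const 1) hXint, integral_const]
      simp [hmdef]
    rw [e2]
  rw [h2] at h1
  calc mgf X P t ≤ 1 - m + m * Real.exp t := h1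
    _ = Real.exp (Real.log (1 - m + m * Real.exp t)) :=
        (Real.exp_log (aux_h_pos hm0 hm1 t)).symm
    _ ≤ Real.exp (t * m + t ^ 2 / 8) := by
        rw [Real.exp_le_exp]
        have := aux_log_le hm0 hm1 t
        linarith [this]

lemma aux_tail_ge {Ω : Type*} [MeasurableSpace Ω] {P : Measure Ω} [IsProbabilityMeasure P]
    {N : ℕ} {X : Fin N → Ω → ℝ} (hmeas : ∀ n, Measurable (X n))
    (hind : iIndepFun X P)
    (h01 : ∀ n ω, X n ω ∈ Set.Icc (0:ℝ) 1) {m : ℝ}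
    (hm : ∀ n, ∫ ω, X n ω ∂P = m) {δ : ℝ} (hδ : 0 < δ) :
    (P {ω | (N:ℝ) * m + N * δ ≤ ∑ n, X n ω}).toReal ≤ Real.exp (-2 * δ ^ 2 * N) := by
  have ht : (0:ℝ) ≤ 4 * δ := by linarith
  have hSint := hind.integrable_exp_mul_sum (t := 4 * δ) hmeas
    (s := Finset.univ) (fun n _ => aux_int_exp (hmeas n) (h01 n) (4 * δ))
  have hcher := measure_ge_le_exp_mul_mgf (μ := P) (X := ∑ i, X i)
    ((N:ℝ) * m + N * δ) ht hSint
  have hset : {ω | (N:ℝ) * m + N * δ ≤ (∑ i, X i) ω}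
      = {ω | (N:ℝ) * m + N * δ ≤ ∑ n, X n ω} := by
    ext ω; simp [Finset.sum_apply]
  rw [hset] at hcher
  have hmgf : mgf (∑ i, X i) P (4 * δ) = ∏ i, mgf (X i) P (4 * δ) :=
    hind.mgf_sum hmeas Finset.univ
  have hprod : ∏ i, mgf (X i) P (4 * δ) ≤ Real.exp ((4*δ) * m + (4*δ) ^ 2 / 8) ^ N := by
    calc ∏ i, mgf (X i) P (4*δ)
        ≤ ∏ _i : Fin N, Real.exp ((4*δ) * m + (4*δ) ^ 2 / 8) := by
          refine Finset.prod_le_prod (fun i _ => mgf_nonneg) (fun i _ => ?_)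
          have := aux_mgf_le (P := P) (hmeas i) (h01 i) (4*δ)
          rwa [hm i] at this
      _ = Real.exp ((4*δ) * m + (4*δ) ^ 2 / 8) ^ N := by
          simp [Finset.prod_const, Finset.card_univ]
  calc (P {ω | (N:ℝ) * m + N * δ ≤ ∑ n, X n ω}).toReal
      ≤ Real.exp (-(4*δ) * ((N:ℝ)*m + N*δ)) * mgf (∑ i, X i) P (4*δ) := hcher
    _ ≤ Real.exp (-(4*δ) * ((N:ℝ)*m + N*δ)) * Real.exp ((4*δ) * m + (4*δ) ^ 2 / 8) ^ N := by
        rw [hmgf]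
        exact mul_le_mul_of_nonneg_left hprod (Real.exp_pos _).le
    _ = Real.exp (-2 * δ ^ 2 * N) := by
        rw [← Real.exp_nat_mul, ← Real.exp_add, Real.exp_eq_exp]
        ring

lemma aux_tail_le {Ω : Type*} [MeasurableSpace Ω] {P : Measure Ω} [IsProbabilityMeasure P]
    {N : ℕ} {X : Fin N → Ω → ℝ} (hmeas : ∀ n, Measurable (X n))
    (hind : iIndepFun X P)
    (h01 : ∀ n ω, X n ω ∈ Set.Icc (0:ℝ) 1) {m : ℝ}
    (hm : ∀ n, ∫ ω, X n ω ∂P = m) {δ : ℝ} (hδ : 0 < δ) :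
    (P {ω | ∑ n, X n ω ≤ (N:ℝ) * m - N * δ}).toReal ≤ Real.exp (-2 * δ ^ 2 * N) := by
  have hmeas' : ∀ n, Measurable (fun ω => 1 - X n ω) :=
    fun n => (measurable_const.sub (hmeas n))
  have hind' : iIndepFun (fun n => fun ω => 1 - X n ω) P := by
    have := hind.comp (fun _ => fun x : ℝ => 1 - x) (fun _ => measurable_const.sub measurable_id)
    exact this
  have h01' : ∀ n ω, (1 - X n ω) ∈ Set.Icc (0:ℝ) 1 := by
    intro n ω
    have h1 := (h01 n ω).1; have h2 := (h01 n ω).2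
    constructor <;> simp <;> linarith
  have hm' : ∀ n, ∫ ω, (1 - X n ω) ∂P = 1 - m := by
    intro n
    rw [integral_sub (integrable_const 1) (aux_int_X (hmeas n) (h01 n)), integral_const, hm n]
    simp
  have h := aux_tail_ge (P := P) hmeas' hind' h01' hm' hδ
  have hset : {ω | (N:ℝ) * (1-m) + N * δ ≤ ∑ n, (1 - X n ω)}
      = {ω | ∑ n, X n ω ≤ (N:ℝ) * m - N * δ} := by
    ext ω
    simp only [Set.mem_setOf_eq, Finset.sum_sub_distrib, Finset.sum_const,
      Finset.card_univ, Fintype.card_fin, nsmul_eq_mul, mul_one]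
    constructor <;> intro h <;> linarith
  rwa [hset] at h

end AuxHoeffding

/-- Theorem 1 of the paper (abstract form): the estimated feasible set
`Π_{f,N} = {π : Ĵ_N(π) ≤ K}`, built from sample means of truncated constraint-value
samples, is sandwiched between the `(-ε)`-feasible and `ε`-feasible policy sets with
probability at least `1 - 2 |Π| exp(-2(ε-α)² N)`, for any `ε` exceeding the truncation
error `α`. -/
theorem stmt5 {Ω : Type*} [MeasurableSpace Ω] (P : Measure Ω) [IsProbabilityMeasure P]
    {Pol : Type*} [Fintype Pol] [Nonempty Pol]
    (α : ℝ) (hα : 0 ≤ α) (K : ℝ) (N : ℕ) (hN : 0 < N) (ε : ℝ) (hε : α < ε)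
    (Y Z : Pol → Fin N → Ω → ℝ)
    (hYmeas : ∀ π n, Measurable (Y π n)) (hZmeas : ∀ π n, Measurable (Z π n))
    (hYindep : ∀ π, iIndepFun (Y π) P)
    (hYid : ∀ π n, IdentDistrib (Y π n) (Y π ⟨0, hN⟩) P P)
    (hY01 : ∀ π n ω, Y π n ω ∈ Set.Icc (0 : ℝ) 1)
    (hZ01 : ∀ π n ω, Z π n ω ∈ Set.Icc (0 : ℝ) 1)
    (hYZ : ∀ π n, ∀ᵐ ω ∂P, |Y π n ω - Z π n ω| ≤ α)
    (J : Pol → ℝ) (hJ : ∀ π, J π = ∫ ω, Y π ⟨0, hN⟩ ω ∂P)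
    (Jhat : Pol → Ω → ℝ) (hJhat : ∀ π ω, Jhat π ω = (∑ n, Z π n ω) / N)
    (PfN : Ω → Set Pol) (hPfN : ∀ ω, PfN ω = {π | Jhat π ω ≤ K})
    (Pf : ℝ → Set Pol) (hPf : ∀ δ : ℝ, Pf δ = {π | J π ≤ K + δ}) :
    1 - 2 * (Fintype.card Pol) * Real.exp (-2 * (ε - α) ^ 2 * N)
      ≤ (P {ω | Pf (-ε) ⊆ PfN ω ∧ PfN ω ⊆ Pf ε}).toReal := by
  classical
  set δ := ε - α with hδdef
  have hδ : 0 < δ := by linarith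
  have hNpos : (0:ℝ) < N := by exact_mod_cast hN
  -- mean of each Y π n
  have hmean : ∀ π n, ∫ ω, Y π n ω ∂P = J π := by
    intro π n
    rw [hJ π]
    exact (hYid π n).integral_eq
  -- bad events
  set bad : Pol → Set Ω := fun π =>
    {ω | (N:ℝ) * J π + N * δ ≤ ∑ n, Y π n ω} ∪
      {ω | ∑ n, Y π n ω ≤ (N:ℝ) * J π - N * δ} with hbaddef
  have hsummeas : ∀ π, Measurable (fun ω => ∑ n, Y π n ω) := by
    intro π
    exact Finset.measurable_sum Finset.univ (fun n _ => hYmeas π n)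
  have hbadmeas : ∀ π, MeasurableSet (bad π) := by
    intro π
    exact (measurableSet_le measurable_const (hsummeas π)).union
      (measurableSet_le (hsummeas π) measurable_const)
  have hbadP : ∀ π, (P (bad π)).toReal ≤ 2 * Real.exp (-2 * δ ^ 2 * N) := by
    intro π
    have hub := aux_tail_ge (P := P) (hYmeas π) (hYindep π) (hY01 π)
      (fun n => hmean π n) hδ
    have hlb := aux_tail_le (P := P) (hYmeas π) (hYindep π) (hY01 π)
      (fun n => hmean π n) hδ
    have hle : P (bad π) ≤ P {ω | (N:ℝ) * J π + N * δ ≤ ∑ n, Y π n ω}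
        + P {ω | ∑ n, Y π n ω ≤ (N:ℝ) * J π - N * δ} := measure_union_le _ _
    have hfin : P {ω | (N:ℝ) * J π + N * δ ≤ ∑ n, Y π n ω}
        + P {ω | ∑ n, Y π n ω ≤ (N:ℝ) * J π - N * δ} ≠ ⊤ :=
      ENNReal.add_ne_top.2 ⟨measure_ne_top _ _, measure_ne_top _ _⟩
    have := ENNReal.toReal_mono hfin hle
    rw [ENNReal.toReal_add (measure_ne_top _ _) (measure_ne_top _ _)] at this
    linarith
  -- the a.e. truncation bound
  have hae : ∀ᵐ ω ∂P, ∀ π (n : Fin N), |Y π n ω - Z π n ω| ≤ α :=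
    ae_all_iff.2 fun π => ae_all_iff.2 fun n => hYZ π n
  -- the good event contains the complement of bad events (a.e.)
  have h1 : P ((⋃ π, bad π)ᶜ) ≤ P {ω | Pf (-ε) ⊆ PfN ω ∧ PfN ω ⊆ Pf ε} := by
    apply measure_mono_ae
    filter_upwards [hae] with ω hω
    intro hmem
    have hmem2 : ∀ π, ω ∉ bad π := fun π hπ => hmem (Set.mem_iUnion.2 ⟨π, hπ⟩)
    have hnb : ∀ π, (∑ n, Y π n ω < (N:ℝ) * J π + N * δ) ∧
        ((N:ℝ) * J π - N * δ < ∑ n, Y π n ω) := by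
      intro π
      have := hmem2 π
      rw [hbaddef] at this
      simp only [Set.mem_union, Set.mem_setOf_eq, not_or, not_le] at this
      exact this
    have hZY : ∀ π, ∑ n, Z π n ω ≤ ∑ n, Y π n ω + N * α := by
      intro π
      have : ∑ n, Z π n ω ≤ ∑ n : Fin N, (Y π n ω + α) := by
        refine Finset.sum_le_sum fun n _ => ?_
        have := abs_le.1 (hω π n)
        linarith [this.1]
      simpa [Finset.sum_add_distrib, Finset.card_univ, mul_comm] using this
    have hYZ' : ∀ π, ∑ n, Y π n ω ≤ ∑ n, Z π n ω + N * α := by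
      intro π
      have : ∑ n, Y π n ω ≤ ∑ n : Fin N, (Z π n ω + α) := by
        refine Finset.sum_le_sum fun n _ => ?_
        have := abs_le.1 (hω π n)
        linarith [this.2]
      simpa [Finset.sum_add_distrib, Finset.card_univ, mul_comm] using this
    constructor
    · -- Pf (-ε) ⊆ PfN ω
      intro π hπ
      rw [hPf] at hπ
      have hJπ : J π ≤ K - ε := by simp only [Set.mem_setOf_eq] at hπ; linarith
      rw [hPfN]
      have h2 : ∑ n, Z π n ω < (N:ℝ) * K := by
        have := (hnb π).1
        have := hZY π
        rw [hδdef] at *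
        nlinarith
      show Jhat π ω ≤ K
      rw [hJhat]
      rw [div_le_iff₀ hNpos]
      nlinarith
    · -- PfN ω ⊆ Pf ε
      intro π hπ
      rw [hPfN] at hπ
      have hhat : Jhat π ω ≤ K := hπ
      rw [hJhat, div_le_iff₀ hNpos] at hhat
      rw [hPf]
      show J π ≤ K + ε
      have h2 := (hnb π).2
      have h3 := hYZ' π
      rw [hδdef] at h2
      nlinarith
  -- union bound
  have hUnion : (P (⋃ π, bad π)).toReal ≤ 2 * (Fintype.card Pol) * Real.exp (-2 * δ ^ 2 * N) := by
    have hle : P (⋃ π, bad π) ≤ ∑ π, P (bad π) := by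
      have := measure_biUnion_finset_le (μ := P) Finset.univ bad
      simpa using this
    have hfin : (∑ π, P (bad π)) ≠ ⊤ :=
      (ENNReal.sum_lt_top.2 fun π _ => measure_lt_top _ _).ne
    have h := ENNReal.toReal_mono hfin hle
    rw [ENNReal.toReal_sum (fun π _ => measure_ne_top _ _)] at h
    have h2 : ∑ π, (P (bad π)).toReal ≤ ∑ _π : Pol, 2 * Real.exp (-2 * δ ^ 2 * N) :=
      Finset.sum_le_sum fun π _ => hbadP π
    rw [Finset.sum_const, Finset.card_univ, nsmul_eq_mul] at h2
    calc (P (⋃ π, bad π)).toReal ≤ ∑ π, (P (bad π)).toReal := h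
      _ ≤ (Fintype.card Pol) * (2 * Real.exp (-2 * δ ^ 2 * N)) := h2
      _ = 2 * (Fintype.card Pol) * Real.exp (-2 * δ ^ 2 * N) := by ring
  -- complement
  have hUmeas : MeasurableSet (⋃ π, bad π) := MeasurableSet.iUnion fun π => hbadmeas π
  have hcompl : (P ((⋃ π, bad π)ᶜ)).toReal = 1 - (P (⋃ π, bad π)).toReal := by
    rw [measure_compl hUmeas (measure_ne_top _ _), measure_univ,
      ENNReal.toReal_sub_of_le prob_le_one ENNReal.one_ne_top]
    simp
  have hfinal : (P ((⋃ π, bad π)ᶜ)).toReal ≤ (P {ω | Pf (-ε) ⊆ PfN ω ∧ PfN ω ⊆ Pf ε}).toReal :=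
    ENNReal.toReal_mono (measure_ne_top _ _) h1
  rw [hcompl] at hfinal
  have : 1 - 2 * (Fintype.card Pol) * Real.exp (-2 * δ ^ 2 * N)
      ≤ 1 - (P (⋃ π, bad π)).toReal := by linarith
  rw [hδdef] at this
  linarith
end

section
/- Let (Ω, ℱ, P) be a probability space, Π a nonempty finite set, α ≥ 0, K ∈ ℝ, N ≥ 1 a natural number, and ε > α. For each π ∈ Π, let Y^π_1, …, Y^π_N be independent identically distributed random variables taking values in [0,1] with mean J(π) := E[Y^π_1], and let Z^π_1, …, Z^π_N be random variables taking values in [0,1] such that |Y^π_n − Z^π_n| ≤ α almost surely for every n. Define Ĵ_N(π) := (1/N) ∑_{n=1}^N Z^π_n and Π_{f,N} := {π ∈ Π : Ĵ_N(π) ≤ K}. Suppose that {π ∈ Π : J(π) ≤ K + ε} = ∅. Then P(Π_{f,N} = ∅) ≥ 1 − 2 · |Π| · exp(−2(ε − α)² N). -/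
section Aux
open Real

lemma hoeffding_key (m : ℝ) (hm0 : 0 ≤ m) (hm1 : m ≤ 1) (t : ℝ) :
    1 - m + m * exp t ≤ exp (t * m + t ^ 2 / 8) := by
  set φ : ℝ → ℝ := fun s => 1 - m + m * exp s with hφ
  have hφpos : ∀ s, 0 < φ s := by
    intro s
    rcases eq_or_lt_of_le hm0 with h | h
    · simp [hφ, ← h]
    · have h2 : 0 < m * exp s := by positivity
      simp only [hφ]
      nlinarith
  set g : ℝ → ℝ := fun s => s * m + s ^ 2 / 8 - log (φ s) with hg
  set g1 : ℝ → ℝ := fun s => m + s / 4 - m * exp s / φ s with hg1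
  have hφd : ∀ s, HasDerivAt φ (m * exp s) s := by
    intro s
    rw [hφ]; exact ((Real.hasDerivAt_exp s).const_mul m).const_add (1 - m)
  have hgd : ∀ s, HasDerivAt g (g1 s) s := by
    intro s
    have h1 : HasDerivAt (fun s : ℝ => s * m + s ^ 2 / 8) (m + s / 4) s := by
      have := ((hasDerivAt_id s).mul_const m).add
        (((hasDerivAt_pow 2 s)).div_const 8)
      exact this.congr_deriv (by norm_num; ring)
    have h2 : HasDerivAt (fun s => log (φ s)) (m * exp s / φ s) s :=
      (hφd s).log (hφpos s).ne'
    rw [hg, hg1]; exact h1.sub h2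
  have hg1d : ∀ s, HasDerivAt g1 (1 / 4 - m * exp s * (1 - m) / (φ s) ^ 2) s := by
    intro s
    have h1 : HasDerivAt (fun s : ℝ => m + s / 4) (1 / 4) s := by
      simpa using ((hasDerivAt_id s).div_const 4).const_add m
    have h2 : HasDerivAt (fun s => m * exp s / φ s)
        ((m * exp s * φ s - m * exp s * (m * exp s)) / (φ s) ^ 2) s :=
      ((Real.hasDerivAt_exp s).const_mul m).div (hφd s) (hφpos s).ne'
    have h3 := h1.sub h2
    exact h3.congr_deriv (by simp only [hφ]; ring)
  have hg1mono : Monotone g1 := by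
    apply monotone_of_deriv_nonneg (fun s => (hg1d s).differentiableAt)
    intro s
    rw [(hg1d s).deriv, sub_nonneg, div_le_iff₀ (pow_pos (hφpos s) 2)]
    simp only [hφ]
    nlinarith [sq_nonneg (1 - m - m * exp s), exp_pos s]
  have hg1_0 : g1 0 = 0 := by
    have h1 : φ 0 = 1 := by simp [hφ]
    simp [hg1, h1]
  have h0 : g 0 = 0 := by
    have h1 : φ 0 = 1 := by simp [hφ]
    simp [hg, h1]
  have hcont : Continuous g := by
    have : Differentiable ℝ g := fun s => (hgd s).differentiableAt
    exact this.continuous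
  have hgt : 0 ≤ g t := by
    rcases le_total 0 t with ht | ht
    · have hmono := monotoneOn_of_deriv_nonneg (convex_Ici (0:ℝ))
        hcont.continuousOn
        (fun x _ => (hgd x).differentiableAt.differentiableWithinAt)
        (fun x hx => by
          rw [(hgd x).deriv, ← hg1_0]
          exact hg1mono (le_of_lt (by simpa using hx)))
      have := hmono (Set.self_mem_Ici) (Set.mem_Ici.2 ht) ht
      rwa [h0] at this
    · have hanti := antitoneOn_of_deriv_nonpos (convex_Iic (0:ℝ))
        hcont.continuousOn
        (fun x _ => (hgd x).differentiableAt.differentiableWithinAt)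
        (fun x hx => by
          rw [(hgd x).deriv, ← hg1_0]
          exact hg1mono (le_of_lt (by simpa using hx)))
      have := hanti (Set.mem_Iic.2 ht) (Set.self_mem_Iic) ht
      rwa [h0] at this
  have : log (φ t) ≤ t * m + t ^ 2 / 8 := by
    simp only [hg] at hgt; linarith
  have := (Real.log_le_iff_le_exp (hφpos t)).1 this
  simpa [hφ] using this

open MeasureTheory ProbabilityTheory

lemma mgf_le_Icc {Ω : Type*} [MeasurableSpace Ω] (μ : Measure Ω) [IsProbabilityMeasure μ]
    {X : Ω → ℝ} (hX : Measurable X) (h01 : ∀ ω, X ω ∈ Set.Icc (0 : ℝ) 1) (t : ℝ) :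
    mgf X μ t ≤ exp (t * (∫ ω, X ω ∂μ) + t ^ 2 / 8) := by
  have hXint : Integrable X μ := by
    refine Integrable.mono' (integrable_const 1) hX.aestronglyMeasurable
      (Filter.Eventually.of_forall fun ω => ?_)
    rw [Real.norm_eq_abs, abs_le]
    exact ⟨by linarith [(h01 ω).1], (h01 ω).2⟩
  set m := ∫ ω, X ω ∂μ with hm
  have hm0 : 0 ≤ m := integral_nonneg fun ω => (h01 ω).1
  have hm1 : m ≤ 1 := by
    have := integral_mono hXint (integrable_const 1) fun ω => (h01 ω).2
    simpa using this
  have hptwise : ∀ ω, exp (t * X ω) ≤ 1 - X ω + X ω * exp t := by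
    intro ω
    have h := convexOn_exp.2 (Set.mem_univ (0 : ℝ)) (Set.mem_univ t)
      (by linarith [(h01 ω).2] : 0 ≤ 1 - X ω) (h01 ω).1 (by ring)
    simpa [smul_eq_mul, mul_comm] using h
  have hInt2 : Integrable (fun ω => 1 - X ω + X ω * exp t) μ :=
    ((integrable_const 1).sub hXint).add (hXint.mul_const _)
  have hIntExp : Integrable (fun ω => exp (t * X ω)) μ := by
    refine Integrable.mono' (integrable_const (exp |t|))
      ((hX.const_mul t).exp).aestronglyMeasurable
      (Filter.Eventually.of_forall fun ω => ?_)
    rw [Real.norm_eq_abs, abs_of_pos (exp_pos _), exp_le_exp]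
    calc t * X ω ≤ |t * X ω| := le_abs_self _
      _ = |t| * |X ω| := abs_mul _ _
      _ ≤ |t| * 1 := by
          have := abs_le.2 ⟨by linarith [(h01 ω).1], (h01 ω).2⟩
          exact mul_le_mul_of_nonneg_left this (abs_nonneg t)
      _ = |t| := mul_one _
  calc mgf X μ t = ∫ ω, exp (t * X ω) ∂μ := rfl
    _ ≤ ∫ ω, (1 - X ω + X ω * exp t) ∂μ := integral_mono hIntExp hInt2 hptwise
    _ = 1 - m + m * exp t := by
        have e1 : ∫ ω, (1 - X ω + X ω * exp t) ∂μ
            = (∫ ω, (1 - X ω) ∂μ) + ∫ ω, X ω * exp t ∂μ :=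
          integral_add ((integrable_const 1).sub hXint) (hXint.mul_const _)
        have e2 : ∫ ω, (1 - X ω) ∂μ = (∫ _ω, (1 : ℝ) ∂μ) - ∫ ω, X ω ∂μ :=
          integral_sub (integrable_const 1) hXint
        rw [e1, e2, integral_mul_const, integral_const]
        simp [hm]
    _ ≤ exp (t * m + t ^ 2 / 8) := hoeffding_key m hm0 hm1 t

lemma hoeffding_tail {Ω : Type*} [MeasurableSpace Ω] (μ : Measure Ω) [IsProbabilityMeasure μ]
    {N : ℕ} (X : Fin N → Ω → ℝ) (hmeas : ∀ n, Measurable (X n))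
    (hindep : iIndepFun X μ)
    (h01 : ∀ n ω, X n ω ∈ Set.Icc (0 : ℝ) 1) (δ : ℝ) (hδ : 0 < δ) :
    (μ {ω | (∑ n, X n ω) ≤ (∑ n, ∫ ω, X n ω ∂μ) - N * δ}).toReal
      ≤ exp (-2 * δ ^ 2 * N) := by
  set m : Fin N → ℝ := fun n => ∫ ω, X n ω ∂μ with hm
  have hXint : ∀ n, Integrable (X n) μ := by
    intro n
    refine Integrable.mono' (integrable_const 1) (hmeas n).aestronglyMeasurable
      (Filter.Eventually.of_forall fun ω => ?_)
    rw [Real.norm_eq_abs, abs_le]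
    exact ⟨by linarith [(h01 n ω).1], (h01 n ω).2⟩
  have hm01 : ∀ n, m n ∈ Set.Icc (0 : ℝ) 1 := by
    intro n
    refine ⟨integral_nonneg fun ω => (h01 n ω).1, ?_⟩
    have := integral_mono (hXint n) (integrable_const 1) fun ω => (h01 n ω).2
    simpa using this
  set W : Fin N → Ω → ℝ := fun n ω => X n ω - m n with hW
  have hWmeas : ∀ n, Measurable (W n) := fun n => (hmeas n).sub measurable_const
  have hWindep : iIndepFun W μ :=
    hindep.comp (fun n x => x - m n) (fun n => measurable_id.sub measurable_const)
  set t : ℝ := -(4 * δ) with ht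
  have htle : t ≤ 0 := by simp [ht]; positivity
  have hWbd : ∀ n ω, |W n ω| ≤ 1 := by
    intro n ω
    rw [abs_le, hW]
    constructor
    · show -1 ≤ X n ω - m n
      linarith [(h01 n ω).1, (hm01 n).2]
    · show X n ω - m n ≤ 1
      linarith [(h01 n ω).2, (hm01 n).1]
  have hWexpint : ∀ (u : ℝ) n, Integrable (fun ω => exp (u * W n ω)) μ := by
    intro u n
    refine Integrable.mono' (integrable_const (exp |u|))
      (((hWmeas n).const_mul u).exp).aestronglyMeasurable
      (Filter.Eventually.of_forall fun ω => ?_)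
    rw [Real.norm_eq_abs, abs_of_pos (exp_pos _), exp_le_exp]
    calc u * W n ω ≤ |u * W n ω| := le_abs_self _
      _ = |u| * |W n ω| := abs_mul _ _
      _ ≤ |u| * 1 := mul_le_mul_of_nonneg_left (hWbd n ω) (abs_nonneg u)
      _ = |u| := mul_one _
  have hmgfW : ∀ n, mgf (W n) μ t ≤ exp (t ^ 2 / 8) := by
    intro n
    have hsplit : mgf (W n) μ t = mgf (X n) μ t / exp (t * m n) := by
      rw [mgf, mgf]
      simp_rw [hW, mul_sub, Real.exp_sub]
      rw [integral_div]
    rw [hsplit, div_le_iff₀ (exp_pos _), ← Real.exp_add]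
    calc mgf (X n) μ t ≤ exp (t * m n + t ^ 2 / 8) := mgf_le_Icc μ (hmeas n) (h01 n) t
      _ = exp (t ^ 2 / 8 + t * m n) := by rw [add_comm]
  have hint : Integrable (fun ω => exp (t * (∑ n, W n) ω)) μ :=
    hWindep.integrable_exp_mul_sum hWmeas (fun n _ => hWexpint t n)
  have hchern := measure_le_le_exp_mul_mgf (μ := μ) (X := ∑ n, W n) (-(N * δ)) htle hint
  have hmgfS : mgf (∑ n, W n) μ t ≤ exp (N * (t ^ 2 / 8)) := by
    rw [hWindep.mgf_sum hWmeas Finset.univ]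
    calc ∏ n, mgf (W n) μ t ≤ ∏ _n : Fin N, exp (t ^ 2 / 8) :=
          Finset.prod_le_prod (fun n _ => mgf_nonneg) (fun n _ => hmgfW n)
      _ = exp (t ^ 2 / 8) ^ N := by simp
      _ = exp (N * (t ^ 2 / 8)) := by rw [← Real.exp_nat_mul]
  have hevent : {ω | (∑ n, X n ω) ≤ Finset.univ.sum m - N * δ}
      = {ω | (∑ n, W n) ω ≤ -(N * δ)} := by
    ext ω
    simp only [Set.mem_setOf_eq, Finset.sum_apply, hW, Finset.sum_sub_distrib]
    constructor <;> intro h <;> linarith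
  rw [hevent]
  calc (μ {ω | (∑ n, W n) ω ≤ -(N * δ)}).toReal
      ≤ exp (-t * -(N * δ)) * mgf (∑ n, W n) μ t := hchern
    _ ≤ exp (-t * -(N * δ)) * exp (N * (t ^ 2 / 8)) := by
        exact mul_le_mul_of_nonneg_left hmgfS (le_of_lt (exp_pos _))
    _ = exp (-t * -(N * δ) + N * (t ^ 2 / 8)) := (Real.exp_add _ _).symm
    _ ≤ exp (-2 * δ ^ 2 * N) := by
        rw [exp_le_exp, ht]
        ring_nf
        nlinarith [sq_nonneg δ, Nat.cast_nonneg (α := ℝ) N]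

end Aux

open MeasureTheory ProbabilityTheory



open MeasureTheory ProbabilityTheory

/-- Remark following Theorem 1: if the `ε`-feasible policy set `{π : J(π) ≤ K + ε}` is
empty for some `ε` exceeding the truncation error `α`, then the estimated feasible set
`Π_{f,N}` is empty with probability at least `1 - 2 |Π| exp(-2(ε-α)² N)`. -/
theorem stmt6 {Ω : Type*} [MeasurableSpace Ω] (P : Measure Ω) [IsProbabilityMeasure P]
    {Pol : Type*} [Fintype Pol] [Nonempty Pol]
    (α : ℝ) (hα : 0 ≤ α) (K : ℝ) (N : ℕ) (hN : 0 < N) (ε : ℝ) (hε : α < ε)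
    (Y Z : Pol → Fin N → Ω → ℝ)
    (hYmeas : ∀ π n, Measurable (Y π n)) (hZmeas : ∀ π n, Measurable (Z π n))
    (hYindep : ∀ π, iIndepFun (Y π) P)
    (hYid : ∀ π n, IdentDistrib (Y π n) (Y π ⟨0, hN⟩) P P)
    (hY01 : ∀ π n ω, Y π n ω ∈ Set.Icc (0 : ℝ) 1)
    (hZ01 : ∀ π n ω, Z π n ω ∈ Set.Icc (0 : ℝ) 1)
    (hYZ : ∀ π n, ∀ᵐ ω ∂P, |Y π n ω - Z π n ω| ≤ α)
    (J : Pol → ℝ) (hJ : ∀ π, J π = ∫ ω, Y π ⟨0, hN⟩ ω ∂P)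
    (Jhat : Pol → Ω → ℝ) (hJhat : ∀ π ω, Jhat π ω = (∑ n, Z π n ω) / N)
    (PfN : Ω → Set Pol) (hPfN : ∀ ω, PfN ω = {π | Jhat π ω ≤ K})
    (hempty : {π : Pol | J π ≤ K + ε} = ∅) :
    1 - 2 * (Fintype.card Pol) * Real.exp (-2 * (ε - α) ^ 2 * N)
      ≤ (P {ω | PfN ω = ∅}).toReal := by
  set δ : ℝ := ε - α with hδdef
  have hδ : 0 < δ := by simp [hδdef]; linarith
  have hNR : (0 : ℝ) < N := by exact_mod_cast hN
  set e : ℝ := Real.exp (-2 * δ ^ 2 * N) with he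
  have hJgt : ∀ π, K + ε < J π := by
    intro π
    by_contra h
    exact Set.eq_empty_iff_forall_notMem.1 hempty π (by simpa using not_lt.1 h)
  have hmean : ∀ π n, ∫ ω, Y π n ω ∂P = J π := by
    intro π n
    rw [hJ π]
    exact (hYid π n).integral_eq
  -- per-policy tail bound
  have hπbound : ∀ π, (P {ω | Jhat π ω ≤ K}).toReal ≤ e := by
    intro π
    have htail := hoeffding_tail P (Y π) (hYmeas π) (hYindep π) (hY01 π) δ hδ
    have hsub : {ω | Jhat π ω ≤ K} ≤ᵐ[P]
        {ω | (∑ n, Y π n ω) ≤ (∑ n, ∫ ω, Y π n ω ∂P) - N * δ} := by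
      have hae : ∀ᵐ ω ∂P, ∀ n, |Y π n ω - Z π n ω| ≤ α := ae_all_iff.2 (hYZ π)
      refine hae.mono fun ω hω hmem => ?_
      change (∑ n, Y π n ω) ≤ (∑ n, ∫ ω, Y π n ω ∂P) - N * δ
      have hsumZ : (∑ n, Z π n ω) ≤ K * N := by
        have hh : Jhat π ω ≤ K := hmem
        rw [hJhat π ω, div_le_iff₀ hNR] at hh
        exact hh
      have hsumY : (∑ n, Y π n ω) ≤ (∑ n, Z π n ω) + N * α := by
        have h1 : ∀ n, Y π n ω ≤ Z π n ω + α := fun n => by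
          have := abs_le.1 (hω n); linarith [this.2]
        calc (∑ n, Y π n ω) ≤ ∑ n, (Z π n ω + α) :=
              Finset.sum_le_sum fun n _ => h1 n
          _ = (∑ n, Z π n ω) + N * α := by
              rw [Finset.sum_add_distrib]
              simp [mul_comm]
      have hsummean : (∑ n, ∫ ω, Y π n ω ∂P) = N * J π := by
        simp [hmean π, mul_comm]
      rw [hsummean, hδdef]
      have hlt := hJgt π
      show (∑ n, Y π n ω) ≤ ↑N * J π - ↑N * (ε - α)
      nlinarith [hsumZ, hsumY, mul_lt_mul_of_pos_left (hJgt π) hNR]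
    calc (P {ω | Jhat π ω ≤ K}).toReal
        ≤ (P {ω | (∑ n, Y π n ω) ≤ (∑ n, ∫ ω, Y π n ω ∂P) - N * δ}).toReal :=
          ENNReal.toReal_mono (measure_ne_top _ _) (measure_mono_ae hsub)
      _ ≤ e := htail
  -- union bound
  have hJhatmeas : ∀ π, Measurable (Jhat π) := by
    intro π
    have : Jhat π = fun ω => (∑ n, Z π n ω) / N := funext (hJhat π)
    rw [this]
    exact (Finset.measurable_sum _ fun n _ => hZmeas π n).div_const _
  set B : Set Ω := ⋃ π, {ω | Jhat π ω ≤ K} with hB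
  have hBmeas : MeasurableSet B :=
    MeasurableSet.iUnion fun π => measurableSet_le (hJhatmeas π) measurable_const
  have hBbound : (P B).toReal ≤ (Fintype.card Pol) * e := by
    have h1 : P B ≤ ∑' π, P {ω | Jhat π ω ≤ K} := measure_iUnion_le _
    have h2 : ∑' π, P {ω | Jhat π ω ≤ K}
        ≤ ∑' (_ : Pol), ENNReal.ofReal e := by
      refine ENNReal.tsum_le_tsum fun π => ?_
      exact (ENNReal.le_ofReal_iff_toReal_le (measure_ne_top _ _)
        (Real.exp_pos _).le).2 (hπbound π)
    have h3 : ∑' (_ : Pol), ENNReal.ofReal e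
        = (Fintype.card Pol) * ENNReal.ofReal e := by
      rw [tsum_fintype]
      simp [Finset.sum_const, nsmul_eq_mul]
    have h4 : P B ≤ (Fintype.card Pol) * ENNReal.ofReal e := h1.trans (h2.trans_eq h3)
    have h5 : ((Fintype.card Pol : ENNReal) * ENNReal.ofReal e).toReal
        = (Fintype.card Pol) * e := by
      simp only [ENNReal.toReal_mul, ENNReal.toReal_ofReal (Real.exp_pos _).le]
      norm_num
      rw [he]
      congr 1
      positivity
    calc (P B).toReal ≤ ((Fintype.card Pol : ENNReal) * ENNReal.ofReal e).toReal :=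
          ENNReal.toReal_mono (by finiteness) h4
      _ = (Fintype.card Pol) * e := h5
  have hAeq : {ω | PfN ω = ∅} = Bᶜ := by
    ext ω
    simp only [hB, Set.mem_compl_iff, Set.mem_iUnion, Set.mem_setOf_eq, hPfN ω,
      Set.eq_empty_iff_forall_notMem, not_exists]
  rw [hAeq, prob_compl_eq_one_sub hBmeas,
    ENNReal.toReal_sub_of_le prob_le_one ENNReal.one_ne_top, ENNReal.toReal_one]
  have hepos : 0 < e := Real.exp_pos _
  have hcard : (1 : ℝ) ≤ Fintype.card Pol := by
    exact_mod_cast Fintype.card_pos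
  nlinarith [hBbound]
end

section
/- Let (Ω, ℱ, P) be a probability space, S a nonempty finite set, r ≥ 0, and N ≥ 1 a natural number. For each π ∈ S, let Y^π_1, …, Y^π_N be independent identically distributed random variables taking values in [0,1] with mean V(π) := E[Y^π_1], and let Z^π_1, …, Z^π_N be random variables taking values in [0,1] such that 0 ≤ Y^π_n − Z^π_n ≤ r almost surely for every n. Define V̂_N(π) := (1/N) ∑_{n=1}^N Z^π_n. Suppose π* ∈ S is the unique maximizer of V over S, and for π ∈ S \ {π*} set Δ^π := V(π*) − V(π); assume Δ^π ≥ 2r for all π ∈ S \ {π*}. Then P(∃ π ∈ S \ {π*}, V̂_N(π) ≥ V̂_N(π*)) ≤ ∑_{π ∈ S \ {π*}} 2 · exp(−2(Δ^π/2 − r)² N). -/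
open MeasureTheory ProbabilityTheory

section helpers
open Real

lemma hoeff_scalar {p : ℝ} (hp0 : 0 ≤ p) (hp1 : p ≤ 1) (h : ℝ) :
    1 - p + p * exp h ≤ exp (p * h + h ^ 2 / 8) := by
  set g : ℝ → ℝ := fun x => 1 - p + p * exp x with hg
  have hgpos : ∀ x, 0 < g x := by
    intro x
    rcases eq_or_lt_of_le hp0 with h0 | h0
    · simp [hg, ← h0]
    · have := exp_pos x
      have : 0 < p * exp x := mul_pos h0 this
      simp only [hg]; nlinarith
  -- D h = p*h + h^2/8 - log (g h), want D h ≥ 0 = D 0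
  set D : ℝ → ℝ := fun x => p * x + x ^ 2 / 8 - log (g x) with hD
  set D' : ℝ → ℝ := fun x => p + x / 4 - p * exp x / g x with hD'
  have hgderiv : ∀ x, HasDerivAt g (p * exp x) x := by
    intro x
    exact ((Real.hasDerivAt_exp x).const_mul p).const_add (1 - p)
  have hDderiv : ∀ x, HasDerivAt D (D' x) x := by
    intro x
    have h1 : HasDerivAt (fun x => log (g x)) (p * exp x / g x) x :=
      (hgderiv x).log (hgpos x).ne'
    have := ((hasDerivAt_id x).const_mul p |>.add ((hasDerivAt_pow 2 x).div_const 8)).sub h1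
    refine this.congr_deriv ?_
    simp only [hD', id, pow_one, Nat.cast_ofNat]
    ring
  have hD'deriv : ∀ x, HasDerivAt D' (1/4 - p * exp x * (1 - p) / (g x) ^ 2) x := by
    intro x
    have h1 : HasDerivAt (fun x => p * exp x / g x)
        ((p * exp x * g x - p * exp x * (p * exp x)) / (g x) ^ 2) x :=
      ((Real.hasDerivAt_exp x).const_mul p).div (hgderiv x) (hgpos x).ne'
    have h2 : HasDerivAt (fun x => p + x / 4) (1/4) x := by
      simpa using (hasDerivAt_id x).div_const 4 |>.const_add p
    have h2' : D' = fun x => (p + x / 4) - p * exp x / g x := by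
      funext x; simp [hD']
    rw [h2']
    have := h2.sub h1
    refine this.congr_deriv ?_
    have := (hgpos x).ne'
    field_simp [hg]
    ring
  have hD'nonneg : ∀ x, 0 ≤ 1/4 - p * exp x * (1 - p) / (g x) ^ 2 := by
    intro x
    rw [sub_nonneg, div_le_iff₀ (pow_pos (hgpos x) 2)]
    have : (g x) ^ 2 = ((1 - p) + p * exp x) ^ 2 := by simp [hg]
    nlinarith [sq_nonneg ((1 - p) - p * exp x), exp_pos x, mul_nonneg hp0 (exp_pos x).le]
  have hD'mono : Monotone D' :=
    monotone_of_deriv_nonneg (fun x => (hD'deriv x).differentiableAt)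
      (fun x => by rw [(hD'deriv x).deriv]; exact hD'nonneg x)
  have hD'0 : D' 0 = 0 := by simp [hD', hg]
  have hDmono : MonotoneOn D (Set.Ici 0) := by
    apply monotoneOn_of_deriv_nonneg (convex_Ici 0)
      ((Differentiable.continuous (fun x => (hDderiv x).differentiableAt)).continuousOn)
      (fun x _ => (hDderiv x).differentiableAt.differentiableWithinAt)
    intro x hx
    rw [(hDderiv x).deriv, ← hD'0]
    exact hD'mono (le_of_lt (by simpa using hx))
  have hDanti : AntitoneOn D (Set.Iic 0) := by
    apply antitoneOn_of_deriv_nonpos (convex_Iic 0)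
      ((Differentiable.continuous (fun x => (hDderiv x).differentiableAt)).continuousOn)
      (fun x _ => (hDderiv x).differentiableAt.differentiableWithinAt)
    intro x hx
    rw [(hDderiv x).deriv, ← hD'0]
    exact hD'mono (le_of_lt (by simpa using hx))
  have hD0 : D 0 = 0 := by simp [hD, hg]
  have hDnonneg : 0 ≤ D h := by
    rcases le_total 0 h with hh | hh
    · rw [← hD0]; exact hDmono Set.self_mem_Ici hh hh
    · rw [← hD0]; exact hDanti hh Set.self_mem_Iic hh
  have : log (g h) ≤ p * h + h ^ 2 / 8 := by simp only [hD] at hDnonneg; linarith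
  calc g h = exp (log (g h)) := (exp_log (hgpos h)).symm
    _ ≤ _ := exp_le_exp.mpr this

open MeasureTheory ProbabilityTheory

lemma exp_mul_integrable {Ω : Type*} [MeasurableSpace Ω] {P : Measure Ω}
    [IsProbabilityMeasure P] {X : Ω → ℝ} (hX : Measurable X)
    (hX01 : ∀ ω, X ω ∈ Set.Icc (0:ℝ) 1) (t : ℝ) :
    Integrable (fun ω => exp (t * X ω)) P := by
  refine (integrable_const (exp |t|)).mono' ((hX.const_mul t).exp.aestronglyMeasurable) ?_
  filter_upwards with ω
  rw [Real.norm_eq_abs, abs_of_pos (exp_pos _), exp_le_exp]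
  rcases hX01 ω with ⟨h0, h1⟩
  rcases le_total t 0 with ht | ht
  · calc t * X ω ≤ 0 := mul_nonpos_of_nonpos_of_nonneg ht h0
      _ ≤ |t| := abs_nonneg t
  · calc t * X ω ≤ t * 1 := by nlinarith
      _ ≤ |t| := by rw [abs_of_nonneg ht]; linarith

lemma mgf_le_hoeff {Ω : Type*} [MeasurableSpace Ω] {P : Measure Ω}
    [IsProbabilityMeasure P] {X : Ω → ℝ} (hX : Measurable X)
    (hX01 : ∀ ω, X ω ∈ Set.Icc (0:ℝ) 1) (t : ℝ) :
    mgf X P t ≤ exp (t * (∫ ω, X ω ∂P) + t ^ 2 / 8) := by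
  have hXint : Integrable X P := by
    refine (integrable_const (1:ℝ)).mono' hX.aestronglyMeasurable ?_
    filter_upwards with ω
    rw [Real.norm_eq_abs, abs_of_nonneg (hX01 ω).1]; exact (hX01 ω).2
  set μ := ∫ ω, X ω ∂P with hμ
  have hμ0 : 0 ≤ μ := integral_nonneg fun ω => (hX01 ω).1
  have hμ1 : μ ≤ 1 := by
    calc μ ≤ ∫ _, (1:ℝ) ∂P := integral_mono hXint (integrable_const 1) (fun ω => (hX01 ω).2)
      _ = 1 := by simp
  have step1 : mgf X P t ≤ 1 - μ + μ * exp t := by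
    have hpw : ∀ ω, exp (t * X ω) ≤ 1 - X ω + X ω * exp t := by
      intro ω
      rcases hX01 ω with ⟨h0, h1⟩
      have := convexOn_exp.2 (Set.mem_univ (0:ℝ)) (Set.mem_univ t)
        (by linarith : (0:ℝ) ≤ 1 - X ω) h0 (by ring)
      simpa [smul_eq_mul, mul_comm] using this
    calc mgf X P t = ∫ ω, exp (t * X ω) ∂P := rfl
      _ ≤ ∫ ω, (1 - X ω + X ω * exp t) ∂P := by
          refine integral_mono (exp_mul_integrable hX hX01 t) ?_ hpw
          exact (show Integrable (fun ω => 1 - X ω) P from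
              (integrable_const 1).sub hXint).add (hXint.mul_const _)
      _ = 1 - μ + μ * exp t := by
          rw [integral_add (show Integrable (fun ω => 1 - X ω) P from
              (integrable_const 1).sub hXint)
              (show Integrable (fun ω => X ω * exp t) P from hXint.mul_const _),
            integral_sub (integrable_const 1) hXint, integral_mul_const]
          simp [hμ]
  calc mgf X P t ≤ 1 - μ + μ * exp t := step1
    _ ≤ exp (μ * t + t ^ 2 / 8) := hoeff_scalar hμ0 hμ1 t
    _ = exp (t * μ + t ^ 2 / 8) := by rw [mul_comm]

/-- Hoeffding upper-tail inequality for independent [0,1] variables with common mean. -/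
lemma hoeff_tail {Ω : Type*} [MeasurableSpace Ω] (P : Measure Ω)
    [IsProbabilityMeasure P] {N : ℕ} {X : Fin N → Ω → ℝ}
    (hmeas : ∀ n, Measurable (X n))
    (hindep : iIndepFun X P)
    (hX01 : ∀ n ω, X n ω ∈ Set.Icc (0:ℝ) 1)
    {μ : ℝ} (hmean : ∀ n, ∫ ω, X n ω ∂P = μ)
    {ε : ℝ} (hε : 0 ≤ ε) :
    (P {ω | N * μ + N * ε ≤ ∑ n, X n ω}).toReal ≤ exp (-2 * ε ^ 2 * N) := by
  have hchern := measure_ge_le_exp_mul_mgf (X := ∑ n, X n) (μ := P) (t := 4 * ε)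
    (N * μ + N * ε) (by positivity) ?_
  · simp only [Finset.sum_apply] at hchern
    refine hchern.trans ?_
    rw [(hindep.mgf_sum hmeas Finset.univ)]
    have hprod : ∏ n, mgf (X n) P (4 * ε) ≤ exp (N * ((4*ε) * μ + (4*ε)^2/8)) := by
      calc ∏ n, mgf (X n) P (4 * ε)
          ≤ ∏ n : Fin N, exp ((4*ε) * μ + (4*ε)^2/8) := by
            refine Finset.prod_le_prod (fun n _ => mgf_nonneg) (fun n _ => ?_)
            have := mgf_le_hoeff (P := P) (hmeas n) (hX01 n) (4*ε)
            rwa [hmean n] at this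
        _ = exp (N * ((4*ε) * μ + (4*ε)^2/8)) := by
            rw [Finset.prod_const, ← Real.exp_nat_mul, Finset.card_univ, Fintype.card_fin]
    calc exp (-(4*ε) * (N * μ + N * ε)) * ∏ n, mgf (X n) P (4 * ε)
        ≤ exp (-(4*ε) * (N * μ + N * ε)) * exp (N * ((4*ε) * μ + (4*ε)^2/8)) := by
          exact mul_le_mul_of_nonneg_left hprod (exp_pos _).le
      _ = exp (-2 * ε ^ 2 * N) := by rw [← exp_add]; ring_nf
  · exact hindep.integrable_exp_mul_sum (t := 4*ε) hmeas
      (fun n _ => exp_mul_integrable (hmeas n) (hX01 n) _)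

lemma int01 {Ω : Type*} [MeasurableSpace Ω] {P : Measure Ω} [IsProbabilityMeasure P]
    {X : Ω → ℝ} (hX : Measurable X) (hX01 : ∀ ω, X ω ∈ Set.Icc (0:ℝ) 1) :
    Integrable X P := by
  refine (integrable_const (1:ℝ)).mono' hX.aestronglyMeasurable ?_
  filter_upwards with ω
  rw [Real.norm_eq_abs, abs_of_nonneg (hX01 ω).1]; exact (hX01 ω).2

end helpers


/-- Core selection-error bound inside Theorem 2: `π*` is the unique maximizer of the true
value `V` over the finite set `S`, `V̂_N(π)` is the sample mean of `N` truncated value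
samples `Z^π_n` (one-sided truncation error at most `r` from i.i.d. samples `Y^π_n` with
mean `V(π)`), and each gap `Δ^π = V(π*) - V(π)` is at least `2r`; then the probability
that some suboptimal sample mean reaches that of `π*` is at most
`∑_{π ≠ π*} 2 exp(-2(Δ^π/2 - r)² N)`. -/
theorem stmt8 {Ω : Type*} [MeasurableSpace Ω] (P : Measure Ω) [IsProbabilityMeasure P]
    {S : Type*} [Fintype S] [Nonempty S] [DecidableEq S]
    (r : ℝ) (hr : 0 ≤ r) (N : ℕ) (hN : 0 < N)
    (Y Z : S → Fin N → Ω → ℝ)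
    (hYmeas : ∀ π n, Measurable (Y π n)) (hZmeas : ∀ π n, Measurable (Z π n))
    (hYindep : ∀ π, iIndepFun (Y π) P)
    (hYid : ∀ π n, IdentDistrib (Y π n) (Y π ⟨0, hN⟩) P P)
    (hY01 : ∀ π n ω, Y π n ω ∈ Set.Icc (0 : ℝ) 1)
    (hZ01 : ∀ π n ω, Z π n ω ∈ Set.Icc (0 : ℝ) 1)
    (hYZ : ∀ π n, ∀ᵐ ω ∂P, 0 ≤ Y π n ω - Z π n ω ∧ Y π n ω - Z π n ω ≤ r)
    (V : S → ℝ) (hV : ∀ π, V π = ∫ ω, Y π ⟨0, hN⟩ ω ∂P)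
    (Vhat : S → Ω → ℝ) (hVhat : ∀ π ω, Vhat π ω = (∑ n, Z π n ω) / N)
    (πstar : S) (hπstar : ∀ π, π ≠ πstar → V π < V πstar)
    (Δ : S → ℝ) (hΔ : ∀ π, Δ π = V πstar - V π)
    (hgap : ∀ π, π ≠ πstar → 2 * r ≤ Δ π) :
    (P {ω | ∃ π, π ≠ πstar ∧ Vhat π ω ≥ Vhat πstar ω}).toReal
      ≤ ∑ π ∈ Finset.univ.erase πstar, 2 * Real.exp (-2 * (Δ π / 2 - r) ^ 2 * N) := by
  classical
  have hmeanY : ∀ π n, ∫ ω, Y π n ω ∂P = V π := fun π n => by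
    rw [hV]; exact (hYid π n).integral_eq
  set t : S → ℝ := fun π => Δ π / 2 - r with ht
  have htnn : ∀ π, π ≠ πstar → 0 ≤ t π := fun π hπ => by
    have := hgap π hπ; simp only [ht]; linarith
  set A : S → Set Ω := fun π => {ω | N * V π + N * t π ≤ ∑ n, Y π n ω} with hA
  set B : S → Set Ω := fun π =>
    {ω | N * (1 - V πstar) + N * t π ≤ ∑ n, (1 - Y πstar n ω)} with hB
  set E : S → Set Ω := fun π => {ω | Vhat πstar ω ≤ Vhat π ω} with hE
  -- union bound decomposition
  have hEq : {ω | ∃ π, π ≠ πstar ∧ Vhat π ω ≥ Vhat πstar ω}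
      = ⋃ π ∈ Finset.univ.erase πstar, E π := by
    ext ω
    simp [hE, Finset.mem_erase, ge_iff_le, and_comm]
  -- a.s. inclusion E π ⊆ A π ∪ B π
  have hae : ∀ᵐ ω ∂P, ∀ π n, 0 ≤ Y π n ω - Z π n ω ∧ Y π n ω - Z π n ω ≤ r := by
    rw [ae_all_iff]; intro π; rw [ae_all_iff]; exact hYZ π
  have hincl : ∀ π, π ≠ πstar → ∀ᵐ ω ∂P, ω ∈ E π → ω ∈ A π ∪ B π := by
    intro π hπ
    filter_upwards [hae] with ω hgood hmem
    by_contra hcon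
    rw [Set.mem_union, not_or] at hcon
    obtain ⟨hnA, hnB⟩ := hcon
    simp only [hA, Set.mem_setOf_eq, not_le] at hnA
    simp only [hB, Set.mem_setOf_eq, not_le] at hnB
    simp only [hE, Set.mem_setOf_eq, hVhat] at hmem
    have hNpos : (0:ℝ) < N := Nat.cast_pos.mpr hN
    have h1 : ∑ n, Z πstar n ω ≤ ∑ n, Z π n ω := by
      rwa [div_le_div_iff_of_pos_right hNpos] at hmem
    have h2 : ∑ n, Z π n ω ≤ ∑ n, Y π n ω :=
      Finset.sum_le_sum fun n _ => by linarith [(hgood π n).1]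
    have h3 : ∑ n, (Y πstar n ω - r) ≤ ∑ n, Z πstar n ω :=
      Finset.sum_le_sum fun n _ => by linarith [(hgood πstar n).2]
    rw [Finset.sum_sub_distrib, Finset.sum_const, Finset.card_univ,
      Fintype.card_fin, nsmul_eq_mul] at h3
    rw [Finset.sum_sub_distrib, Finset.sum_const, Finset.card_univ,
      Fintype.card_fin, nsmul_eq_mul, mul_one] at hnB
    have hΔ' := hΔ π
    have := hgap π hπ
    -- hnB : N - ∑ Y πstar < N (1 - V πstar) + N t π, i.e. ∑ Y πstar > N V πstar - N t π
    simp only [ht] at hnA hnB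
    have h4 : (N:ℝ) * Δ π = N * V πstar - N * V π := by rw [hΔ']; ring
    have h7 : (0:ℝ) ≤ N * r := by positivity
    nlinarith [hnA, hnB, h1, h2, h3, h4, h7]
  -- per-π tail bounds
  have hAbound : ∀ π, π ≠ πstar →
      (P (A π)).toReal ≤ Real.exp (-2 * (t π) ^ 2 * N) :=
    fun π hπ => hoeff_tail P (hYmeas π) (hYindep π) (hY01 π)
      (hmeanY π) (htnn π hπ)
  have hBbound : ∀ π, π ≠ πstar →
      (P (B π)).toReal ≤ Real.exp (-2 * (t π) ^ 2 * N) := by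
    intro π hπ
    refine hoeff_tail P (X := fun n ω => 1 - Y πstar n ω)
      (fun n => measurable_const.sub (hYmeas πstar n)) ?_ 
      (fun n ω => ⟨show (0:ℝ) ≤ 1 - Y πstar n ω by linarith [(hY01 πstar n ω).2],
        show (1:ℝ) - Y πstar n ω ≤ 1 by linarith [(hY01 πstar n ω).1]⟩)
      (fun n => by
        rw [integral_sub (integrable_const 1) (int01 (hYmeas πstar n) (hY01 πstar n)),
          hmeanY πstar n]
        simp)
      (htnn π hπ)
    exact (hYindep πstar).comp (fun _ x => 1 - x)
      (fun _ => measurable_const.sub measurable_id)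
  -- assemble
  rw [hEq]
  have hfin : ∀ (s : Set Ω), P s ≠ ⊤ := fun s => measure_ne_top P s
  calc (P (⋃ π ∈ Finset.univ.erase πstar, E π)).toReal
      ≤ (∑ π ∈ Finset.univ.erase πstar, P (E π)).toReal := by
        refine ENNReal.toReal_mono ?_ (measure_biUnion_finset_le _ _)
        exact (ENNReal.sum_lt_top.mpr fun π _ => (measure_lt_top P _)).ne
    _ = ∑ π ∈ Finset.univ.erase πstar, (P (E π)).toReal :=
        ENNReal.toReal_sum fun π _ => hfin _
    _ ≤ ∑ π ∈ Finset.univ.erase πstar, 2 * Real.exp (-2 * (Δ π / 2 - r) ^ 2 * N) := by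
        refine Finset.sum_le_sum fun π hπ => ?_
        have hπ' : π ≠ πstar := (Finset.mem_erase.mp hπ).1
        calc (P (E π)).toReal
            ≤ (P (A π ∪ B π)).toReal :=
              ENNReal.toReal_mono (hfin _) (measure_mono_ae (hincl π hπ'))
          _ ≤ (P (A π)).toReal + (P (B π)).toReal := by
              rw [← ENNReal.toReal_add (hfin _) (hfin _)]
              exact ENNReal.toReal_mono (by
                exact (ENNReal.add_lt_top.mpr ⟨measure_lt_top P _, measure_lt_top P _⟩).ne)
                (measure_union_le _ _)
          _ ≤ 2 * Real.exp (-2 * (Δ π / 2 - r) ^ 2 * N) := by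
              have := hAbound π hπ'; have := hBbound π hπ'
              simp only [ht] at *
              linarith
end

section
/- Let (Ω, ℱ, P) be a probability space, Π a nonempty finite set, α ≥ 0, K ∈ ℝ, N ≥ 1 a natural number, ε > α, and V : Π → ℝ a function. For each π ∈ Π, let Y^π_1, …, Y^π_N be independent identically distributed random variables taking values in [0,1] with mean J(π) := E[Y^π_1], and Z^π_1, …, Z^π_N random variables taking values in [0,1] with |Y^π_n − Z^π_n| ≤ α almost surely for every n. Define Ĵ_N(π) := (1/N) ∑_{n=1}^N Z^π_n, Π_{f,N} := {π ∈ Π : Ĵ_N(π) ≤ K}, and for δ ∈ ℝ, Π_f^δ := {π ∈ Π : J(π) ≤ K + δ}. Assume Π_f^{−ε} is nonempty. Then with probability at least 1 − 2·|Π|·exp(−2(ε − α)² N), the set Π_{f,N} is nonempty and every π* ∈ Π_{f,N} with V(π*) = max_{π ∈ Π_{f,N}} V(π) satisfies max_{π ∈ Π_f^{−ε}} V(π) ≤ V(π*) ≤ max_{π ∈ Π_f^ε} V(π). -/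
open MeasureTheory ProbabilityTheory


lemma aux_log_bound (p u : ℝ) (hp0 : 0 ≤ p) (hp1 : p ≤ 1) :
    Real.log (1 - p + p * Real.exp u) ≤ p * u + u ^ 2 / 8 := by
  set D : ℝ → ℝ := fun u => 1 - p + p * Real.exp u with hDdef
  have hD : ∀ u, 0 < D u := by
    intro u
    rcases hp0.eq_or_lt with h | h
    · simp [hDdef, ← h]
    · have := Real.exp_pos u
      have : 0 < p * Real.exp u := by positivity
      simp only [hDdef]; linarith
  set g : ℝ → ℝ := fun u => p * Real.exp u / D u with hgdef
  set f : ℝ → ℝ := fun u => p * u + u ^ 2 / 8 - Real.log (D u) with hfdef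
  set f' : ℝ → ℝ := fun u => p + u / 4 - g u with hf'def
  have hDder : ∀ u, HasDerivAt D (p * Real.exp u) u := by
    intro u
    have : HasDerivAt (fun u : ℝ => p * Real.exp u) (p * Real.exp u) u :=
      (Real.hasDerivAt_exp u).const_mul p
    simpa [hDdef] using (this.const_add (1 - p))
  have hfder : ∀ u, HasDerivAt f (f' u) u := by
    intro u
    have hlog : HasDerivAt (fun u => Real.log (D u)) (p * Real.exp u / D u) u :=
      (hDder u).log (hD u).ne'
    have h1 : HasDerivAt (fun u : ℝ => p * u + u ^ 2 / 8) (p + 2 * u ^ 1 / 8) u := by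
      exact ((hasDerivAt_id u).const_mul p).add ((hasDerivAt_pow 2 u).div_const 8)
        |>.congr_deriv (by ring)
    have := h1.sub hlog
    exact (this.congr_deriv (by simp only [hf'def, hgdef]; ring) : HasDerivAt f (f' u) u)
  have hgder : ∀ u, HasDerivAt g (p * Real.exp u * (1 - p) / (D u) ^ 2) u := by
    intro u
    have hnum : HasDerivAt (fun u : ℝ => p * Real.exp u) (p * Real.exp u) u :=
      (Real.hasDerivAt_exp u).const_mul p
    have := hnum.div (hDder u) (hD u).ne'
    refine this.congr_deriv ?_
    congr 1
    simp only [hDdef]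
    ring
  have hf'der : ∀ u, HasDerivAt f' (1/4 - p * Real.exp u * (1 - p) / (D u) ^ 2) u := by
    intro u
    have h1 : HasDerivAt (fun u : ℝ => p + u / 4) (1/4) u := by
      simpa using ((hasDerivAt_id u).div_const 4).const_add p
    exact h1.sub (hgder u)
  have hf'mono : Monotone f' := by
    apply monotone_of_deriv_nonneg (fun u => (hf'der u).differentiableAt)
    intro u
    rw [(hf'der u).deriv]
    have hD2 : 0 < (D u) ^ 2 := pow_pos (hD u) 2
    rw [sub_nonneg, div_le_iff₀ hD2]
    have he : 0 < Real.exp u := Real.exp_pos u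
    have hDu : D u = 1 - p + p * Real.exp u := rfl
    nlinarith [sq_nonneg (1 - p - p * Real.exp u), mul_nonneg hp0 he.le]
  have hf'0 : f' 0 = 0 := by
    have : D 0 = 1 := by simp [hDdef]
    simp [hf'def, hgdef, this]
  have hdiff : Differentiable ℝ f := fun u => (hfder u).differentiableAt
  have hf0 : f 0 = 0 := by
    have : D 0 = 1 := by simp [hDdef]
    simp [hfdef, this]
  have hfnonneg : ∀ u, 0 ≤ f u := by
    intro u
    rcases le_total 0 u with h | h
    · have := monotoneOn_of_deriv_nonneg (convex_Ici (0:ℝ)) hdiff.continuous.continuousOn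
        (hdiff.differentiableOn) ?_ (Set.self_mem_Ici) (Set.mem_Ici.mpr h) h
      · rwa [hf0] at this
      · intro x hx
        rw [(hfder x).deriv]
        rw [interior_Ici] at hx
        have : f' 0 ≤ f' x := hf'mono (le_of_lt hx)
        linarith [hf'0 ▸ this]
    · have := antitoneOn_of_deriv_nonpos (convex_Iic (0:ℝ)) hdiff.continuous.continuousOn
        (hdiff.differentiableOn) ?_ (Set.mem_Iic.mpr h) (Set.self_mem_Iic) h
      · rwa [hf0] at this
      · intro x hx
        rw [(hfder x).deriv]
        rw [interior_Iic] at hx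
        have : f' x ≤ f' 0 := hf'mono (le_of_lt hx)
        linarith [hf'0 ▸ this]
    
  have := hfnonneg u
  simp only [hfdef, hDdef] at this
  linarith
open MeasureTheory

lemma aux_exp_integral_bound {Ω : Type*} [MeasurableSpace Ω] (μ : Measure Ω)
    [IsProbabilityMeasure μ] (X : Ω → ℝ) (hX : Measurable X)
    (h01 : ∀ ω, X ω ∈ Set.Icc (0:ℝ) 1) (t : ℝ) :
    ∫ ω, Real.exp (t * X ω) ∂μ ≤ Real.exp (t * (∫ ω, X ω ∂μ) + t ^ 2 / 8) := by
  have hXint : Integrable X μ := by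
    refine (integrable_const (1:ℝ)).mono' hX.aestronglyMeasurable ?_
    exact ae_of_all _ fun ω => by
      rw [Real.norm_eq_abs, abs_le]; exact ⟨by linarith [(h01 ω).1], (h01 ω).2⟩
  set m := ∫ ω, X ω ∂μ with hm
  have hm0 : 0 ≤ m := integral_nonneg fun ω => (h01 ω).1
  have hm1 : m ≤ 1 := by
    calc m ≤ ∫ _ω, (1:ℝ) ∂μ := integral_mono hXint (integrable_const 1) fun ω => (h01 ω).2
    _ = 1 := by simp
  have hpt : ∀ ω, Real.exp (t * X ω) ≤ 1 - X ω + X ω * Real.exp t := by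
    intro ω
    have hx0 := (h01 ω).1
    have hx1 := (h01 ω).2
    have := convexOn_exp.2 (Set.mem_univ (0:ℝ)) (Set.mem_univ t)
      (by linarith : (0:ℝ) ≤ 1 - X ω) hx0 (by ring)
    simpa [smul_eq_mul, mul_comm] using this
  have hexp_int : Integrable (fun ω => Real.exp (t * X ω)) μ := by
    refine (integrable_const (Real.exp |t|)).mono'
      ((hX.const_mul t).exp).aestronglyMeasurable ?_
    refine ae_of_all _ fun ω => ?_
    rw [Real.norm_eq_abs, abs_of_pos (Real.exp_pos _), Real.exp_le_exp]
    calc t * X ω ≤ |t * X ω| := le_abs_self _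
    _ = |t| * |X ω| := abs_mul _ _
    _ ≤ |t| * 1 := by
        refine mul_le_mul_of_nonneg_left ?_ (abs_nonneg t)
        rw [abs_of_nonneg (h01 ω).1]; exact (h01 ω).2
    _ = |t| := mul_one _
  have hstep : ∫ ω, Real.exp (t * X ω) ∂μ ≤ 1 - m + m * Real.exp t := by
    have hrhs_int : Integrable (fun ω => 1 - X ω + X ω * Real.exp t) μ :=
      ((integrable_const 1).sub hXint).add (hXint.mul_const _)
    calc ∫ ω, Real.exp (t * X ω) ∂μ ≤ ∫ ω, (1 - X ω + X ω * Real.exp t) ∂μ :=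
      integral_mono hexp_int hrhs_int hpt
    _ = ∫ ω, (1 + (Real.exp t - 1) * X ω) ∂μ := by congr 1; funext ω; ring
    _ = 1 + (Real.exp t - 1) * m := by
        rw [integral_add (integrable_const 1) (hXint.const_mul _), MeasureTheory.integral_const_mul,
          integral_const]
        simp [hm]
    _ = 1 - m + m * Real.exp t := by ring
  refine hstep.trans ?_
  have hpos : 0 < 1 - m + m * Real.exp t := by
    rcases hm0.eq_or_lt with h | h
    · simp [← h]
    · have : 0 < m * Real.exp t := by positivity
      linarith
  rw [← Real.exp_log hpos, Real.exp_le_exp]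
  calc Real.log (1 - m + m * Real.exp t) ≤ m * t + t ^ 2 / 8 := aux_log_bound m t hm0 hm1
  _ = t * m + t ^ 2 / 8 := by ring
lemma aux_integrable_exp {Ω : Type*} [MeasurableSpace Ω] (μ : Measure Ω)
    [IsProbabilityMeasure μ] (X : Ω → ℝ) (hX : Measurable X)
    (h01 : ∀ ω, X ω ∈ Set.Icc (0:ℝ) 1) (t : ℝ) :
    Integrable (fun ω => Real.exp (t * X ω)) μ := by
  refine (integrable_const (Real.exp |t|)).mono'
    ((hX.const_mul t).exp).aestronglyMeasurable ?_
  refine ae_of_all _ fun ω => ?_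
  rw [Real.norm_eq_abs, abs_of_pos (Real.exp_pos _), Real.exp_le_exp]
  calc t * X ω ≤ |t * X ω| := le_abs_self _
  _ = |t| * |X ω| := abs_mul _ _
  _ ≤ |t| * 1 := by
      refine mul_le_mul_of_nonneg_left ?_ (abs_nonneg t)
      rw [abs_of_nonneg (h01 ω).1]; exact (h01 ω).2
  _ = |t| := mul_one _

open ProbabilityTheory in
lemma aux_chernoff {Ω : Type*} [MeasurableSpace Ω] (μ : Measure Ω) [IsProbabilityMeasure μ]
    {N : ℕ} (W : Fin N → Ω → ℝ) (hmeas : ∀ n, Measurable (W n))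
    (hindep : iIndepFun W μ)
    (h01 : ∀ n ω, W n ω ∈ Set.Icc (0:ℝ) 1)
    (m : ℝ) (hm : ∀ n, ∫ ω, W n ω ∂μ = m) {s : ℝ} (hs : 0 < s) :
    (μ {ω | (N:ℝ) * s ≤ |(∑ n, W n ω) - N * m|}).toReal
      ≤ 2 * Real.exp (-2 * s ^ 2 * N) := by
  have hint : ∀ (t : ℝ), Integrable (fun ω => Real.exp (t * (∑ n, W n) ω)) μ := by
    intro t
    exact hindep.integrable_exp_mul_sum hmeas
      (fun i _ => aux_integrable_exp μ (W i) (hmeas i) (h01 i) t)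
  have hmgf : ∀ t : ℝ, mgf (∑ n, W n) μ t ≤ Real.exp ((t * m + t ^ 2 / 8) * N) := by
    intro t
    rw [hindep.mgf_sum hmeas]
    calc ∏ i, mgf (W i) μ t ≤ ∏ _i : Fin N, Real.exp (t * m + t ^ 2 / 8) := by
          refine Finset.prod_le_prod (fun i _ => mgf_nonneg) (fun i _ => ?_)
          have := aux_exp_integral_bound μ (W i) (hmeas i) (h01 i) t
          rw [hm i] at this
          exact this
    _ = Real.exp ((t * m + t ^ 2 / 8) * N) := by
          rw [Finset.prod_const, Finset.card_univ, Fintype.card_fin,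
            ← Real.exp_nat_mul, mul_comm]
  have hup : (μ {ω | (N:ℝ) * (m + s) ≤ (∑ n, W n) ω}).toReal
      ≤ Real.exp (-2 * s ^ 2 * N) := by
    have h := measure_ge_le_exp_mul_mgf (μ := μ) (X := ∑ n, W n) (t := 4 * s)
      ((N:ℝ) * (m + s)) (by positivity) (hint _)
    refine h.trans ?_
    calc Real.exp (-(4 * s) * ((N:ℝ) * (m + s))) * mgf (∑ n, W n) μ (4 * s)
        ≤ Real.exp (-(4 * s) * ((N:ℝ) * (m + s))) *
            Real.exp (((4 * s) * m + (4 * s) ^ 2 / 8) * N) := by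
          exact mul_le_mul_of_nonneg_left (hmgf _) (Real.exp_pos _).le
    _ = Real.exp (-2 * s ^ 2 * N) := by rw [← Real.exp_add]; ring_nf
  have hlo : (μ {ω | (∑ n, W n) ω ≤ (N:ℝ) * (m - s)}).toReal
      ≤ Real.exp (-2 * s ^ 2 * N) := by
    have h := measure_le_le_exp_mul_mgf (μ := μ) (X := ∑ n, W n) (t := -(4 * s))
      ((N:ℝ) * (m - s)) (by linarith) (hint _)
    refine h.trans ?_
    calc Real.exp (-(-(4 * s)) * ((N:ℝ) * (m - s))) * mgf (∑ n, W n) μ (-(4 * s))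
        ≤ Real.exp (-(-(4 * s)) * ((N:ℝ) * (m - s))) *
            Real.exp ((-(4 * s) * m + (-(4 * s)) ^ 2 / 8) * N) := by
          exact mul_le_mul_of_nonneg_left (hmgf _) (Real.exp_pos _).le
    _ = Real.exp (-2 * s ^ 2 * N) := by rw [← Real.exp_add]; ring_nf
  have hsub : {ω | (N:ℝ) * s ≤ |(∑ n, W n ω) - N * m|} ⊆
      {ω | (N:ℝ) * (m + s) ≤ (∑ n, W n) ω} ∪ {ω | (∑ n, W n) ω ≤ (N:ℝ) * (m - s)} := by
    intro ω hω
    simp only [Set.mem_setOf_eq] at hω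
    rcases le_abs.mp hω with h | h
    · left; simp only [Set.mem_setOf_eq, Finset.sum_apply]; linarith
    · right; simp only [Set.mem_setOf_eq, Finset.sum_apply]; linarith
  calc (μ {ω | (N:ℝ) * s ≤ |(∑ n, W n ω) - N * m|}).toReal
      ≤ ((μ {ω | (N:ℝ) * (m + s) ≤ (∑ n, W n) ω}) +
          μ {ω | (∑ n, W n) ω ≤ (N:ℝ) * (m - s)}).toReal := by
        refine ENNReal.toReal_mono ?_ ((measure_mono hsub).trans (measure_union_le _ _))
        exact ENNReal.add_ne_top.mpr ⟨measure_ne_top _ _, measure_ne_top _ _⟩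
  _ = (μ {ω | (N:ℝ) * (m + s) ≤ (∑ n, W n) ω}).toReal +
        (μ {ω | (∑ n, W n) ω ≤ (N:ℝ) * (m - s)}).toReal :=
      ENNReal.toReal_add (measure_ne_top _ _) (measure_ne_top _ _)
  _ ≤ 2 * Real.exp (-2 * s ^ 2 * N) := by linarith

open MeasureTheory ProbabilityTheory


/-- Corollary of Theorem 1 used in Theorem 2: on the high-probability sandwich event
(of probability at least `1 - 2 |Π| exp(-2(ε-α)² N)`), the estimated feasible set
`Π_{f,N}` is nonempty and the value of any true-value maximizer over `Π_{f,N}` is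
sandwiched between the optimal `(-ε)`-feasible and `ε`-feasible values. -/
theorem stmt10 {Ω : Type*} [MeasurableSpace Ω] (P : Measure Ω) [IsProbabilityMeasure P]
    {Pol : Type*} [Fintype Pol] [Nonempty Pol]
    (α : ℝ) (hα : 0 ≤ α) (K : ℝ) (N : ℕ) (hN : 0 < N) (ε : ℝ) (hε : α < ε)
    (V : Pol → ℝ)
    (Y Z : Pol → Fin N → Ω → ℝ)
    (hYmeas : ∀ π n, Measurable (Y π n)) (hZmeas : ∀ π n, Measurable (Z π n))
    (hYindep : ∀ π, iIndepFun (Y π) P)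
    (hYid : ∀ π n, IdentDistrib (Y π n) (Y π ⟨0, hN⟩) P P)
    (hY01 : ∀ π n ω, Y π n ω ∈ Set.Icc (0 : ℝ) 1)
    (hZ01 : ∀ π n ω, Z π n ω ∈ Set.Icc (0 : ℝ) 1)
    (hYZ : ∀ π n, ∀ᵐ ω ∂P, |Y π n ω - Z π n ω| ≤ α)
    (J : Pol → ℝ) (hJ : ∀ π, J π = ∫ ω, Y π ⟨0, hN⟩ ω ∂P)
    (Jhat : Pol → Ω → ℝ) (hJhat : ∀ π ω, Jhat π ω = (∑ n, Z π n ω) / N)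
    (PfN : Ω → Set Pol) (hPfN : ∀ ω, PfN ω = {π | Jhat π ω ≤ K})
    (Pf : ℝ → Set Pol) (hPf : ∀ δ : ℝ, Pf δ = {π | J π ≤ K + δ})
    (hne : (Pf (-ε)).Nonempty) :
    1 - 2 * (Fintype.card Pol) * Real.exp (-2 * (ε - α) ^ 2 * N)
      ≤ (P {ω | (PfN ω).Nonempty ∧
            ∀ πstar ∈ PfN ω, (∀ π ∈ PfN ω, V π ≤ V πstar) →
              sSup (V '' Pf (-ε)) ≤ V πstar ∧ V πstar ≤ sSup (V '' Pf ε)}).toReal := by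
  classical
  set s : ℝ := ε - α with hsdef
  have hs : 0 < s := by simp only [hsdef]; linarith
  have hNpos : (0:ℝ) < N := by exact_mod_cast hN
  have hmean : ∀ π n, ∫ ω, Y π n ω ∂P = J π := fun π n => by
    rw [(hYid π n).integral_eq, ← hJ π]
  -- bad events
  set B : Pol → Set Ω := fun π => {ω | (N:ℝ) * s ≤ |(∑ n, Y π n ω) - N * J π|} with hBdef
  have hBbound : ∀ π, (P (B π)).toReal ≤ 2 * Real.exp (-2 * s ^ 2 * N) := fun π =>
    aux_chernoff P (Y π) (hYmeas π) (hYindep π) (hY01 π) (J π) (hmean π) hs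
  have hBmeas : ∀ π, MeasurableSet (B π) := by
    intro π
    have hsum : Measurable fun ω => ∑ n, Y π n ω :=
      Finset.measurable_sum Finset.univ (fun n _ => hYmeas π n)
    exact measurableSet_le measurable_const ((hsum.sub measurable_const).abs)
  set G : Set Ω := ⋂ π, (B π)ᶜ with hGdef
  have hGmeas : MeasurableSet G := MeasurableSet.iInter fun π => (hBmeas π).compl
  -- union bound
  have hGc : (P Gᶜ).toReal ≤ 2 * (Fintype.card Pol) * Real.exp (-2 * s ^ 2 * N) := by
    have h1 : P Gᶜ ≤ ∑ π, P (B π) := by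
      rw [hGdef, Set.compl_iInter]
      simp only [compl_compl]
      exact measure_iUnion_fintype_le _ _
    have h2 : (P Gᶜ).toReal ≤ ∑ π, (P (B π)).toReal := by
      have := ENNReal.toReal_mono (by
        exact (ENNReal.sum_lt_top.mpr fun π _ => measure_lt_top _ _).ne) h1
      rwa [ENNReal.toReal_sum (fun π _ => measure_ne_top _ _)] at this
    refine h2.trans ?_
    calc ∑ π, (P (B π)).toReal ≤ ∑ _π : Pol, 2 * Real.exp (-2 * s ^ 2 * N) :=
          Finset.sum_le_sum fun π _ => hBbound π
    _ = 2 * (Fintype.card Pol) * Real.exp (-2 * s ^ 2 * N) := by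
          rw [Finset.sum_const, Finset.card_univ, nsmul_eq_mul]; ring
  -- almost sure truncation set
  set A : Set Ω := {ω | ∀ π n, |Y π n ω - Z π n ω| ≤ α} with hAdef
  have hAnull : P Aᶜ = 0 := by
    have hAE : ∀ᵐ ω ∂P, ∀ π n, |Y π n ω - Z π n ω| ≤ α := by
      rw [ae_all_iff]; intro π; rw [ae_all_iff]; exact hYZ π
    rw [ae_iff] at hAE
    simpa [hAdef, Set.compl_setOf] using hAE
  -- inclusion into the target event
  have hincl : G ∩ A ⊆ {ω | (PfN ω).Nonempty ∧
      ∀ πstar ∈ PfN ω, (∀ π ∈ PfN ω, V π ≤ V πstar) →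
        sSup (V '' Pf (-ε)) ≤ V πstar ∧ V πstar ≤ sSup (V '' Pf ε)} := by
    rintro ω ⟨hG, hA⟩
    have hkey : ∀ π, |Jhat π ω - J π| ≤ ε := by
      intro π
      have h1 : |(∑ n, Z π n ω) - ∑ n, Y π n ω| ≤ (N:ℝ) * α := by
        rw [← Finset.sum_sub_distrib]
        calc |∑ n, (Z π n ω - Y π n ω)| ≤ ∑ n, |Z π n ω - Y π n ω| :=
              Finset.abs_sum_le_sum_abs _ _
        _ ≤ ∑ _n : Fin N, α := Finset.sum_le_sum fun n _ => by
              rw [abs_sub_comm]; exact hA π n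
        _ = (N:ℝ) * α := by rw [Finset.sum_const, Finset.card_univ, Fintype.card_fin,
              nsmul_eq_mul]
      have h2 : |(∑ n, Y π n ω) - N * J π| ≤ (N:ℝ) * s := by
        have := hG
        rw [hGdef, Set.mem_iInter] at this
        have h := this π
        rw [Set.mem_compl_iff, hBdef] at h
        simp only [Set.mem_setOf_eq, not_le] at h
        exact h.le
      have h3 : |(∑ n, Z π n ω) - N * J π| ≤ (N:ℝ) * ε := by
        calc |(∑ n, Z π n ω) - N * J π|
            ≤ |(∑ n, Z π n ω) - ∑ n, Y π n ω| + |(∑ n, Y π n ω) - N * J π| := by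
              have := abs_sub_abs_le_abs_sub ((∑ n, Z π n ω) - N * J π)
                ((∑ n, Y π n ω) - N * J π)
              calc |(∑ n, Z π n ω) - N * J π|
                  = |((∑ n, Z π n ω) - ∑ n, Y π n ω) + ((∑ n, Y π n ω) - N * J π)| := by
                    ring_nf
              _ ≤ _ := abs_add_le _ _
        _ ≤ (N:ℝ) * α + (N:ℝ) * s := add_le_add h1 h2
        _ = (N:ℝ) * ε := by rw [hsdef]; ring
      have heq : Jhat π ω - J π = ((∑ n, Z π n ω) - N * J π) / N := by
        rw [hJhat]; field_simp
      rw [heq, abs_div, abs_of_pos hNpos, div_le_iff₀ hNpos]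
      linarith [h3]
    have hsubset1 : Pf (-ε) ⊆ PfN ω := by
      intro π hπ
      rw [hPf] at hπ
      rw [hPfN]
      have h := (abs_le.mp (hkey π)).2
      simp only [Set.mem_setOf_eq] at hπ ⊢
      linarith
    have hsubset2 : PfN ω ⊆ Pf ε := by
      intro π hπ
      rw [hPfN] at hπ
      rw [hPf]
      have h := (abs_le.mp (hkey π)).1
      simp only [Set.mem_setOf_eq] at hπ ⊢
      linarith
    refine ⟨hne.mono hsubset1, fun πstar hπstar hmax => ⟨?_, ?_⟩⟩
    · refine csSup_le (hne.image V) ?_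
      rintro v ⟨π, hπ, rfl⟩
      exact hmax π (hsubset1 hπ)
    · exact le_csSup (Set.Finite.bddAbove (Set.toFinite _))
        ⟨πstar, hsubset2 hπstar, rfl⟩
  -- put it together
  have hTP : P G ≤ P {ω | (PfN ω).Nonempty ∧
      ∀ πstar ∈ PfN ω, (∀ π ∈ PfN ω, V π ≤ V πstar) →
        sSup (V '' Pf (-ε)) ≤ V πstar ∧ V πstar ≤ sSup (V '' Pf ε)} := by
    rw [← measure_inter_conull hAnull]
    exact measure_mono hincl
  have hT : (P G).toReal ≤ (P {ω | (PfN ω).Nonempty ∧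
      ∀ πstar ∈ PfN ω, (∀ π ∈ PfN ω, V π ≤ V πstar) →
        sSup (V '' Pf (-ε)) ≤ V πstar ∧ V πstar ≤ sSup (V '' Pf ε)}).toReal :=
    ENNReal.toReal_mono (measure_ne_top _ _) hTP
  have hsum : (P G).toReal + (P Gᶜ).toReal = 1 := by
    have := measure_add_measure_compl (μ := P) hGmeas
    rw [measure_univ] at this
    have := congrArg ENNReal.toReal this
    rwa [ENNReal.toReal_add (measure_ne_top _ _) (measure_ne_top _ _),
      ENNReal.toReal_one] at this
  have hgoal : -2 * (ε - α) ^ 2 * (N:ℝ) = -2 * s ^ 2 * N := by rw [hsdef]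
  rw [hgoal]
  linarith
end
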